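/- In U(O), for all i ∈ ℤ≥0, k ∈ ℤ≥0, j,l ∈ ℕ+: Λ^Γ_{j,l,i} D_{k,1}^{Γ,+}(j,l) = D_{k,1}^{Γ,+}(j,l) Λ^Γ_{j,l,i} − 2 D_{k+1,1}^{Γ,+}(j,l) Λ^Γ_{j,l,i−1} + D_{k+2,1}^{Γ,+}(j,l) Λ^Γ_{j,l,i−2}, with the convention Λ^Γ_{j,l,m} = 0 for m < 0 and Λ^Γ_{j,l,0} = 1. -/

import Mathlib

open Finset

noncomputable section

/- Setting: `A` plays the role of the universal enveloping algebra `U(O)` of the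
Onsager algebra.  `X m = x_m^{Γ,+}`, `Y m = x_m^{Γ,-}`, `H m = h_m^Γ` (indexed by `ℤ`
via the conventions `x_{-m}^{Γ,±} = -x_m^{Γ,±}`, `x_0^{Γ,±} = 0`, `h_{-m}^Γ = h_m^Γ`),
and the Lie brackets of `O` are imposed as commutator relations. -/
variable {A : Type*} [Ring A] [Algebra ℂ A]

/-- `Λ^Γ_{j,l,1} = -(h^Γ_{j+l} - h^Γ_{j-l})`. -/
def Lam1 (H : ℤ → A) (j l : ℤ) : A := -(H (j + l) - H (j - l))

/-- `D^{Γ,+}_{u,1}(j,l)`. -/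
def Dp (X H : ℤ → A) (j l : ℤ) : ℕ → A
  | 0 => X j
  | u + 1 => ((1 : ℂ) / 2) • ⁅Dp X H j l u, Lam1 H j l⁆

/-- `D^{Γ,-}_{u,1}(j,l)`. -/
def Dm (Y H : ℤ → A) (j l : ℤ) : ℕ → A
  | 0 => Y l
  | u + 1 => (-((1 : ℂ) / 2)) • ⁅Dm Y H j l u, Lam1 H j l⁆

/-- `p^Γ_s(j,l) = [x_j^{Γ,+}, D^{Γ,-}_{s-1,1}(j,l)]`. -/
def pG (X Y H : ℤ → A) (j l : ℤ) (s : ℕ) : A := ⁅X j, Dm Y H j l (s - 1)⁆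

/-- `Λ^Γ_{j,l,n}`, via the recursion `n Λ_n = -∑_{i=1}^n p_i Λ_{n-i}` equivalent to the
exponential generating series definition. -/
def Lam (X Y H : ℤ → A) (j l : ℤ) : ℕ → A
  | 0 => 1
  | n + 1 =>
      (-(((n : ℂ) + 1)⁻¹)) •
        ∑ i ∈ Finset.range (n + 1), pG X Y H j l (i + 1) * Lam X Y H j l (n - i)
  decreasing_by omega

/-- `D^{Γ,+}_{u,v}(j,l)`. -/
def DvP (X H : ℤ → A) (j l : ℤ) : ℕ → ℕ → A
  | u, 0 => if u = 0 then 1 else 0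
  | u, v + 1 =>
      (((v : ℂ) + 1)⁻¹) • ∑ i ∈ Finset.range (u + 1), Dp X H j l i * DvP X H j l (u - i) v

/-- `D^{Γ,-}_{u,v}(j,l)`. -/
def DvM (Y H : ℤ → A) (j l : ℤ) : ℕ → ℕ → A
  | u, 0 => if u = 0 then 1 else 0
  | u, v + 1 =>
      (((v : ℂ) + 1)⁻¹) • ∑ i ∈ Finset.range (u + 1), Dm Y H j l i * DvM Y H j l (u - i) v

/-- `Λ^Γ_{j,l,m}` extended to `m ∈ ℤ` by `Λ^Γ_{j,l,m} = 0` for `m < 0`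
(and `Λ^Γ_{j,l,0} = 1` by definition of `Lam`). -/
def LamZ (X Y H : ℤ → A) (j l : ℤ) (m : ℤ) : A :=
  if 0 ≤ m then Lam X Y H j l m.toNat else 0
set_option linter.unusedSectionVars false

section AuxLemmas

attribute [local instance] LieRing.ofAssociativeRing

variable (X Y H : ℤ → A) (j l : ℤ)

lemma lie_HS_right (hHH : ∀ k m : ℤ, ⁅H k, H m⁆ = 0) {v : A}
    (hv : v ∈ Submodule.span ℂ (Set.range H)) (r : ℤ) : ⁅v, H r⁆ = 0 := by
  induction hv using Submodule.span_induction with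
  | mem x hx => obtain ⟨m, rfl⟩ := hx; exact hHH m r
  | zero => simp
  | add x y _ _ hx hy => rw [add_lie, hx, hy, add_zero]
  | smul c x _ hx => rw [smul_lie, hx, smul_zero]

lemma lie_Lam1_HS (hHH : ∀ k m : ℤ, ⁅H k, H m⁆ = 0) {v : A}
    (hv : v ∈ Submodule.span ℂ (Set.range H)) : ⁅v, Lam1 H j l⁆ = 0 := by
  rw [Lam1, lie_neg, lie_sub, lie_HS_right H hHH hv, lie_HS_right H hHH hv, sub_self, neg_zero]

lemma hYHlem (hHY : ∀ k l : ℤ, ⁅H k, Y l⁆ = -(2 • (Y (l + k) + Y (l - k))))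
    (b r : ℤ) : ⁅Y b, H r⁆ = 2 • (Y (b + r) + Y (b - r)) := by
  rw [← lie_skew, hHY, neg_neg]

lemma hXHlem (hHX : ∀ k j : ℤ, ⁅H k, X j⁆ = 2 • (X (j + k) - X (k - j)))
    (a r : ℤ) : ⁅X a, H r⁆ = 2 • (X (r - a) - X (a + r)) := by
  rw [← lie_skew, hHX, ← smul_neg, neg_sub]

lemma lie_YS_Lam1 (hHY : ∀ k l : ℤ, ⁅H k, Y l⁆ = -(2 • (Y (l + k) + Y (l - k))))
    {v : A} (hv : v ∈ Submodule.span ℂ (Set.range Y)) :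
    ⁅v, Lam1 H j l⁆ ∈ Submodule.span ℂ (Set.range Y) := by
  have hY : ∀ m : ℤ, Y m ∈ Submodule.span ℂ (Set.range Y) :=
    fun m => Submodule.subset_span ⟨m, rfl⟩
  induction hv using Submodule.span_induction with
  | mem x hx =>
    obtain ⟨b, rfl⟩ := hx
    rw [Lam1, lie_neg, lie_sub, hYHlem Y H hHY, hYHlem Y H hHY]
    exact neg_mem (sub_mem (nsmul_mem (add_mem (hY _) (hY _)) 2)
      (nsmul_mem (add_mem (hY _) (hY _)) 2))
  | zero => simp
  | add x y _ _ hx hy => rw [add_lie]; exact add_mem hx hy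
  | smul c x _ hx => rw [smul_lie]; exact Submodule.smul_mem _ _ hx

lemma lie_XS_Lam1 (hHX : ∀ k j : ℤ, ⁅H k, X j⁆ = 2 • (X (j + k) - X (k - j)))
    {v : A} (hv : v ∈ Submodule.span ℂ (Set.range X)) :
    ⁅v, Lam1 H j l⁆ ∈ Submodule.span ℂ (Set.range X) := by
  have hX : ∀ m : ℤ, X m ∈ Submodule.span ℂ (Set.range X) :=
    fun m => Submodule.subset_span ⟨m, rfl⟩
  induction hv using Submodule.span_induction with
  | mem x hx =>
    obtain ⟨a, rfl⟩ := hx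
    rw [Lam1, lie_neg, lie_sub, hXHlem X H hHX, hXHlem X H hHX]
    exact neg_mem (sub_mem (nsmul_mem (sub_mem (hX _) (hX _)) 2)
      (nsmul_mem (sub_mem (hX _) (hX _)) 2))
  | zero => simp
  | add x y _ _ hx hy => rw [add_lie]; exact add_mem hx hy
  | smul c x _ hx => rw [smul_lie]; exact Submodule.smul_mem _ _ hx

lemma Dm_mem (hHY : ∀ k l : ℤ, ⁅H k, Y l⁆ = -(2 • (Y (l + k) + Y (l - k)))) (u : ℕ) :
    Dm Y H j l u ∈ Submodule.span ℂ (Set.range Y) := by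
  induction u with
  | zero => exact Submodule.subset_span ⟨l, rfl⟩
  | succ u ih =>
    show (-((1 : ℂ) / 2)) • ⁅Dm Y H j l u, Lam1 H j l⁆ ∈ _
    exact Submodule.smul_mem _ _ (lie_YS_Lam1 Y H j l hHY ih)

lemma Dp_mem (hHX : ∀ k j : ℤ, ⁅H k, X j⁆ = 2 • (X (j + k) - X (k - j))) (u : ℕ) :
    Dp X H j l u ∈ Submodule.span ℂ (Set.range X) := by
  induction u with
  | zero => exact Submodule.subset_span ⟨j, rfl⟩
  | succ u ih =>
    show ((1 : ℂ) / 2) • ⁅Dp X H j l u, Lam1 H j l⁆ ∈ _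
    exact Submodule.smul_mem _ _ (lie_XS_Lam1 X H j l hHX ih)

lemma lie_X_YS_HS (hXY : ∀ j l : ℤ, ⁅X j, Y l⁆ = H (j + l) - H (j - l))
    {v : A} (hv : v ∈ Submodule.span ℂ (Set.range Y)) (a : ℤ) :
    ⁅X a, v⁆ ∈ Submodule.span ℂ (Set.range H) := by
  have hH : ∀ m : ℤ, H m ∈ Submodule.span ℂ (Set.range H) :=
    fun m => Submodule.subset_span ⟨m, rfl⟩
  induction hv using Submodule.span_induction with
  | mem x hx => obtain ⟨b, rfl⟩ := hx; rw [hXY]; exact sub_mem (hH _) (hH _)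
  | zero => simp
  | add x y _ _ hx hy => rw [lie_add]; exact add_mem hx hy
  | smul c x _ hx => rw [lie_smul]; exact Submodule.smul_mem _ _ hx

lemma pG_mem (hXY : ∀ j l : ℤ, ⁅X j, Y l⁆ = H (j + l) - H (j - l))
    (hHY : ∀ k l : ℤ, ⁅H k, Y l⁆ = -(2 • (Y (l + k) + Y (l - k)))) (s : ℕ) :
    pG X Y H j l s ∈ Submodule.span ℂ (Set.range H) := by
  rw [pG]
  exact lie_X_YS_HS X Y H hXY (Dm_mem Y H j l hHY (s - 1)) j

end AuxLemmas

section AuxLemmas2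

attribute [local instance] LieRing.ofAssociativeRing

variable (X Y H : ℤ → A) (j l : ℤ)

lemma lie_lie_X_X_Y (hXneg : ∀ m : ℤ, X (-m) = -X m)
    (hXY : ∀ j l : ℤ, ⁅X j, Y l⁆ = H (j + l) - H (j - l))
    (hHX : ∀ k j : ℤ, ⁅H k, X j⁆ = 2 • (X (j + k) - X (k - j)))
    (a b c : ℤ) : ⁅⁅X a, X b⁆, Y c⁆ = 0 := by
  have e1 : X (b + c - a) = -X (a - c - b) := by
    rw [show b + c - a = -(a - c - b) by ring, hXneg]
  have e2 : X (b - c - a) = -X (a + c - b) := by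
    rw [show b - c - a = -(a + c - b) by ring, hXneg]
  have e3 : X (b + (a + c)) = X (a + (b + c)) := by rw [show b + (a + c) = a + (b + c) by ring]
  have e4 : X (b + (a - c)) = X (a + (b - c)) := by rw [show b + (a - c) = a + (b - c) by ring]
  rw [lie_lie, hXY, hXY, lie_sub, lie_sub, hXHlem X H hHX, hXHlem X H hHX,
    hXHlem X H hHX, hXHlem X H hHX, e1, e2, e3, e4]
  abel

lemma lie_lie_XS_X_Y (hXneg : ∀ m : ℤ, X (-m) = -X m)
    (hXY : ∀ j l : ℤ, ⁅X j, Y l⁆ = H (j + l) - H (j - l))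
    (hHX : ∀ k j : ℤ, ⁅H k, X j⁆ = 2 • (X (j + k) - X (k - j)))
    {v : A} (hv : v ∈ Submodule.span ℂ (Set.range X)) (b c : ℤ) :
    ⁅⁅v, X b⁆, Y c⁆ = 0 := by
  induction hv using Submodule.span_induction with
  | mem x hx => obtain ⟨a, rfl⟩ := hx; exact lie_lie_X_X_Y X Y H hXneg hXY hHX a b c
  | zero => simp
  | add x y _ _ hx hy => rw [add_lie, add_lie, hx, hy, add_zero]
  | smul c' x _ hx => rw [smul_lie, smul_lie, hx, smul_zero]

lemma lie_Dp_Lam1 (u : ℕ) :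
    ⁅Dp X H j l u, Lam1 H j l⁆ = (2 : ℂ) • Dp X H j l (u + 1) := by
  show _ = (2 : ℂ) • (((1 : ℂ) / 2) • ⁅Dp X H j l u, Lam1 H j l⁆)
  rw [smul_smul]; norm_num

lemma lie_Lam1_Dm (b : ℕ) :
    ⁅Lam1 H j l, Dm Y H j l b⁆ = (2 : ℂ) • Dm Y H j l (b + 1) := by
  show _ = (2 : ℂ) • ((-((1 : ℂ) / 2)) • ⁅Dm Y H j l b, Lam1 H j l⁆)
  rw [smul_smul, ← lie_skew]
  norm_num

lemma lie_Dp_Dm (hXY : ∀ j l : ℤ, ⁅X j, Y l⁆ = H (j + l) - H (j - l))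
    (hHY : ∀ k l : ℤ, ⁅H k, Y l⁆ = -(2 • (Y (l + k) + Y (l - k))))
    (hHH : ∀ k m : ℤ, ⁅H k, H m⁆ = 0)
    (a b : ℕ) : ⁅Dp X H j l a, Dm Y H j l b⁆ = pG X Y H j l (a + b + 1) := by
  induction a generalizing b with
  | zero =>
    rw [show (0:ℕ) + b + 1 = b + 1 by omega]
    show ⁅X j, Dm Y H j l b⁆ = pG X Y H j l (b + 1)
    rw [pG, Nat.add_sub_cancel]
  | succ a ih =>
    show ⁅((1 : ℂ) / 2) • ⁅Dp X H j l a, Lam1 H j l⁆, Dm Y H j l b⁆ = _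
    rw [smul_lie, lie_lie, lie_Lam1_Dm Y H j l, ih,
      show ⁅Lam1 H j l, pG X Y H j l (a + b + 1)⁆ = 0 from by
        rw [← lie_skew, lie_Lam1_HS H j l hHH (pG_mem X Y H j l hXY hHY _), neg_zero],
      sub_zero, lie_smul, ih (b + 1),
      smul_smul, show a + (b + 1) + 1 = a + 1 + b + 1 by omega]
    norm_num

lemma lie_pG_X (hXneg : ∀ m : ℤ, X (-m) = -X m)
    (hXY : ∀ j l : ℤ, ⁅X j, Y l⁆ = H (j + l) - H (j - l))
    (hHX : ∀ k j : ℤ, ⁅H k, X j⁆ = 2 • (X (j + k) - X (k - j)))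
    (hHY : ∀ k l : ℤ, ⁅H k, Y l⁆ = -(2 • (Y (l + k) + Y (l - k))))
    (hHH : ∀ k m : ℤ, ⁅H k, H m⁆ = 0)
    (m : ℕ) : ⁅pG X Y H j l (m + 1), X j⁆ = (2 : ℂ) • Dp X H j l (m + 1) := by
  have h1 : pG X Y H j l (m + 1) = ⁅Dp X H j l m, Y l⁆ := by
    have := lie_Dp_Dm X Y H j l hXY hHY hHH m 0
    rw [show Dm Y H j l 0 = Y l from rfl] at this
    rw [← this]
  have h2 : ⁅Y l, ⁅Dp X H j l m, X j⁆⁆ = 0 := by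
    rw [← lie_skew, lie_lie_XS_X_Y X Y H hXneg hXY hHX (Dp_mem X H j l hHX m) j l, neg_zero]
  have h3 : ⁅Y l, X j⁆ = Lam1 H j l := by
    rw [← lie_skew, hXY, Lam1]
  rw [h1, lie_lie, h2, sub_zero, h3, lie_Dp_Lam1]

lemma lie_pG_Dp (hXneg : ∀ m : ℤ, X (-m) = -X m)
    (hXY : ∀ j l : ℤ, ⁅X j, Y l⁆ = H (j + l) - H (j - l))
    (hHX : ∀ k j : ℤ, ⁅H k, X j⁆ = 2 • (X (j + k) - X (k - j)))
    (hHY : ∀ k l : ℤ, ⁅H k, Y l⁆ = -(2 • (Y (l + k) + Y (l - k))))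
    (hHH : ∀ k m : ℤ, ⁅H k, H m⁆ = 0)
    (m u : ℕ) : ⁅pG X Y H j l (m + 1), Dp X H j l u⁆ = (2 : ℂ) • Dp X H j l (u + m + 1) := by
  induction u with
  | zero =>
    have := lie_pG_X X Y H j l hXneg hXY hHX hHY hHH m
    rw [show Dp X H j l 0 = X j from rfl, show 0 + m + 1 = m + 1 by omega]
    exact this
  | succ u ih =>
    show ⁅pG X Y H j l (m + 1), ((1 : ℂ) / 2) • ⁅Dp X H j l u, Lam1 H j l⁆⁆ = _
    rw [lie_smul, leibniz_lie, ih, lie_Lam1_HS H j l hHH (pG_mem X Y H j l hXY hHY _),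
      lie_zero, add_zero, smul_lie, lie_Dp_Lam1, smul_smul, smul_smul,
      show u + m + 1 + 1 = u + 1 + m + 1 by omega]
    norm_num

lemma pG_mul_Dp (hXneg : ∀ m : ℤ, X (-m) = -X m)
    (hXY : ∀ j l : ℤ, ⁅X j, Y l⁆ = H (j + l) - H (j - l))
    (hHX : ∀ k j : ℤ, ⁅H k, X j⁆ = 2 • (X (j + k) - X (k - j)))
    (hHY : ∀ k l : ℤ, ⁅H k, Y l⁆ = -(2 • (Y (l + k) + Y (l - k))))
    (hHH : ∀ k m : ℤ, ⁅H k, H m⁆ = 0)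
    (m u : ℕ) : pG X Y H j l (m + 1) * Dp X H j l u =
      Dp X H j l u * pG X Y H j l (m + 1) + (2 : ℂ) • Dp X H j l (u + m + 1) := by
  have h := lie_pG_Dp X Y H j l hXneg hXY hHX hHY hHH m u
  rw [Ring.lie_def] at h
  exact sub_eq_iff_eq_add'.mp h

lemma sumP (M : ℕ) :
    ∑ i ∈ Finset.range M, pG X Y H j l (i + 1) * Lam X Y H j l (M - 1 - i) =
      (-(M : ℂ)) • Lam X Y H j l M := by
  cases M with
  | zero => simp
  | succ M =>
    have h2 : ∑ i ∈ Finset.range (M + 1), pG X Y H j l (i + 1) * Lam X Y H j l (M + 1 - 1 - i) =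
        ∑ i ∈ Finset.range (M + 1), pG X Y H j l (i + 1) * Lam X Y H j l (M - i) := by
      refine Finset.sum_congr rfl fun i hi => ?_
      rw [show M + 1 - 1 - i = M - i by omega]
    have hc : ((M + 1 : ℕ) : ℂ) * (((M : ℂ) + 1)⁻¹) = 1 := by
      push_cast; exact mul_inv_cancel₀ (Nat.cast_add_one_ne_zero M)
    rw [h2, show Lam X Y H j l (M + 1) = (-(((M : ℂ) + 1)⁻¹)) •
        ∑ i ∈ Finset.range (M + 1), pG X Y H j l (i + 1) * Lam X Y H j l (M - i) from by rw [Lam],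
      smul_smul, neg_mul_neg, hc, one_smul]

end AuxLemmas2

/-- `Λ^Γ_{j,l,i} D^{Γ,+}_{k,1} = D^{Γ,+}_{k,1} Λ^Γ_{j,l,i} - 2 D^{Γ,+}_{k+1,1} Λ^Γ_{j,l,i-1}
  + D^{Γ,+}_{k+2,1} Λ^Γ_{j,l,i-2}`. -/
theorem Lam_mul_Dp (X Y H : ℤ → A)
    (hXneg : ∀ m : ℤ, X (-m) = -X m) (hX0 : X 0 = 0)
    (hYneg : ∀ m : ℤ, Y (-m) = -Y m) (hY0 : Y 0 = 0)
    (hHneg : ∀ m : ℤ, H (-m) = H m)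
    (hXY : ∀ j l : ℤ, ⁅X j, Y l⁆ = H (j + l) - H (j - l))
    (hHX : ∀ k j : ℤ, ⁅H k, X j⁆ = 2 • (X (j + k) - X (k - j)))
    (hHY : ∀ k l : ℤ, ⁅H k, Y l⁆ = -(2 • (Y (l + k) + Y (l - k))))
    (hHH : ∀ k m : ℤ, ⁅H k, H m⁆ = 0)
    (i k : ℕ) (j l : ℕ+) :
    LamZ X Y H ((j : ℕ) : ℤ) ((l : ℕ) : ℤ) (i : ℤ) *
        Dp X H ((j : ℕ) : ℤ) ((l : ℕ) : ℤ) k =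
      Dp X H ((j : ℕ) : ℤ) ((l : ℕ) : ℤ) k * LamZ X Y H ((j : ℕ) : ℤ) ((l : ℕ) : ℤ) (i : ℤ)
        - 2 • (Dp X H ((j : ℕ) : ℤ) ((l : ℕ) : ℤ) (k + 1) *
            LamZ X Y H ((j : ℕ) : ℤ) ((l : ℕ) : ℤ) ((i : ℤ) - 1))
        + Dp X H ((j : ℕ) : ℤ) ((l : ℕ) : ℤ) (k + 2) *
            LamZ X Y H ((j : ℕ) : ℤ) ((l : ℕ) : ℤ) ((i : ℤ) - 2) := by
  have h2s : ∀ x : A, (2 : ℕ) • x = (2 : ℂ) • x := fun x => by rw [two_smul, two_smul]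
  set jz : ℤ := ((j : ℕ) : ℤ) with hjz
  set lz : ℤ := ((l : ℕ) : ℤ) with hlz
  set D := Dp X H jz lz with hD
  set L := Lam X Y H jz lz with hL
  set P := pG X Y H jz lz with hP
  set Z := LamZ X Y H jz lz with hZ
  have hZcoe : ∀ n : ℕ, Z ((n : ℕ) : ℤ) = L n := by
    intro n; rw [hZ, hL]; simp [LamZ]
  have hZneg : ∀ m : ℤ, m < 0 → Z m = 0 := by
    intro m hm; rw [hZ, LamZ, if_neg (by omega)]
  have hK : ∀ m u : ℕ, P (m + 1) * D u = D u * P (m + 1) + (2 : ℂ) • D (u + m + 1) :=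
    fun m u => pG_mul_Dp X Y H jz lz hXneg hXY hHX hHY hHH m u
  have hsumP : ∀ M : ℕ, ∑ i ∈ Finset.range M, P (i + 1) * L (M - 1 - i) = (-(M : ℂ)) • L M :=
    fun M => sumP X Y H jz lz M
  have main : ∀ n k : ℕ, L n * D k =
      D k * L n - (2 : ℂ) • (D (k + 1) * Z ((n : ℤ) - 1)) + D (k + 2) * Z ((n : ℤ) - 2) := by
    intro n
    induction n using Nat.strong_induction_on with
    | _ n IH =>
    obtain _ | n := n
    · -- n = 0
      intro k
      rw [hZneg (((0 : ℕ) : ℤ) - 1) (by omega), hZneg (((0 : ℕ) : ℤ) - 2) (by omega),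
        show L 0 = 1 from by rw [hL, Lam]]
      simp
    obtain _ | M := n
    · -- n = 1
      intro k
      have h1 : L (0 + 1) = -(P (0 + 1) * L 0) := by
        rw [hL, hP]
        conv_lhs => rw [Lam]
        norm_num [Finset.sum_range_one]
      have hk1 := hK 0 k
      rw [h1, hZneg (((0 + 1 : ℕ) : ℤ) - 2) (by omega),
        show (((0 + 1 : ℕ) : ℤ) - 1) = ((0 : ℕ) : ℤ) by omega, hZcoe,
        show L 0 = 1 from by rw [hL, Lam], mul_one, mul_one, neg_mul, hk1, mul_neg, mul_zero,
        add_zero]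
      module
    · -- n = M + 2
      intro k
      have hMc : ((M : ℂ) + 2) ≠ 0 := by
        have : ((M + 2 : ℕ) : ℂ) ≠ 0 := Nat.cast_ne_zero.mpr (by omega)
        push_cast at this; convert this using 2
      have hLam : L (M + 1 + 1) = (-((((M + 1 : ℕ) : ℂ) + 1)⁻¹)) •
          ∑ i ∈ Finset.range (M + 1 + 1), P (i + 1) * L (M + 1 - i) := by
        rw [hL, hP, Lam]
      have hS : ((M : ℂ) + 2) • L (M + 1 + 1) =
          -(∑ i ∈ Finset.range (M + 1 + 1), P (i + 1) * L (M + 1 - i)) := by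
        have e : ((((M + 1 : ℕ) : ℂ)) + 1) = ((M : ℂ) + 2) := by push_cast; ring
        rw [hLam, smul_smul, e, mul_neg, mul_inv_cancel₀ hMc, neg_one_smul]
      have hA2 : ∑ i ∈ Finset.range (M + 1 + 1), P (i + 1) * Z (((M + 1 - i : ℕ) : ℤ) - 1) =
          (-(((M + 1 : ℕ)) : ℂ)) • L (M + 1) := by
        rw [Finset.sum_range_succ,
          hZneg (((M + 1 - (M + 1) : ℕ) : ℤ) - 1) (by omega), mul_zero, add_zero,
          show (∑ i ∈ Finset.range (M + 1), P (i + 1) * Z (((M + 1 - i : ℕ) : ℤ) - 1)) =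
            ∑ i ∈ Finset.range (M + 1), P (i + 1) * L (M + 1 - 1 - i) from
            Finset.sum_congr rfl fun i hi => by
              have hi' := Finset.mem_range.mp hi
              rw [show (((M + 1 - i : ℕ) : ℤ) - 1) = ((M + 1 - 1 - i : ℕ) : ℤ) by omega, hZcoe]]
        exact hsumP (M + 1)
      have hA3 : ∑ i ∈ Finset.range (M + 1 + 1), P (i + 1) * Z (((M + 1 - i : ℕ) : ℤ) - 2) =
          (-(M : ℂ)) • L M := by
        rw [Finset.sum_range_succ, Finset.sum_range_succ,
          hZneg (((M + 1 - (M + 1) : ℕ) : ℤ) - 2) (by omega),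
          hZneg (((M + 1 - M : ℕ) : ℤ) - 2) (by omega), mul_zero, mul_zero, add_zero, add_zero,
          show (∑ i ∈ Finset.range M, P (i + 1) * Z (((M + 1 - i : ℕ) : ℤ) - 2)) =
            ∑ i ∈ Finset.range M, P (i + 1) * L (M - 1 - i) from
            Finset.sum_congr rfl fun i hi => by
              have hi' := Finset.mem_range.mp hi
              rw [show (((M + 1 - i : ℕ) : ℤ) - 2) = ((M - 1 - i : ℕ) : ℤ) by omega, hZcoe]]
        exact hsumP M
      have hT1 : ∑ i ∈ Finset.range (M + 1 + 1), D (k + i + 1) * L (M + 1 - i) =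
          (∑ i ∈ Finset.range (M + 1), D (k + 1 + i + 1) * Z (((M + 1 - i : ℕ) : ℤ) - 1))
            + D (k + 1) * L (M + 1) := by
        rw [Finset.sum_range_succ' (fun i => D (k + i + 1) * L (M + 1 - i)) (M + 1)]
        congr 1
        · refine Finset.sum_congr rfl fun i hi => ?_
          have hi' := Finset.mem_range.mp hi
          rw [show k + (i + 1) + 1 = k + 1 + i + 1 by omega,
            show (M + 1 - (i + 1)) = M - i by omega,
            show (((M + 1 - i : ℕ) : ℤ) - 1) = ((M - i : ℕ) : ℤ) by omega, hZcoe]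
      have hA4 : ∑ i ∈ Finset.range (M + 1 + 1), D (k + 1 + i + 1) * Z (((M + 1 - i : ℕ) : ℤ) - 1)
          = (∑ i ∈ Finset.range (M + 1 + 1), D (k + i + 1) * L (M + 1 - i))
            - D (k + 1) * L (M + 1) := by
        rw [Finset.sum_range_succ, hZneg (((M + 1 - (M + 1) : ℕ) : ℤ) - 1) (by omega), mul_zero,
          add_zero, hT1, add_sub_cancel_right]
      have hT2 : ∑ i ∈ Finset.range (M + 1 + 1), D (k + i + 1) * L (M + 1 - i) =
          ((∑ i ∈ Finset.range M, D (k + 2 + i + 1) * Z (((M + 1 - i : ℕ) : ℤ) - 2))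
            + D (k + 2) * L M) + D (k + 1) * L (M + 1) := by
        rw [Finset.sum_range_succ' (fun i => D (k + i + 1) * L (M + 1 - i)) (M + 1)]
        congr 1
        · rw [Finset.sum_range_succ' (fun i => D (k + (i + 1) + 1) * L (M + 1 - (i + 1))) M]
          congr 1
          · refine Finset.sum_congr rfl fun i hi => ?_
            have hi' := Finset.mem_range.mp hi
            rw [show k + (i + 1 + 1) + 1 = k + 2 + i + 1 by omega,
              show (M + 1 - (i + 1 + 1)) = M - 1 - i by omega,
              show (((M + 1 - i : ℕ) : ℤ) - 2) = ((M - 1 - i : ℕ) : ℤ) by omega, hZcoe]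
      have hA5 : ∑ i ∈ Finset.range (M + 1 + 1), D (k + 2 + i + 1) * Z (((M + 1 - i : ℕ) : ℤ) - 2)
          = (∑ i ∈ Finset.range (M + 1 + 1), D (k + i + 1) * L (M + 1 - i))
            - D (k + 1) * L (M + 1) - D (k + 2) * L M := by
        rw [Finset.sum_range_succ, Finset.sum_range_succ,
          hZneg (((M + 1 - (M + 1) : ℕ) : ℤ) - 2) (by omega),
          hZneg (((M + 1 - M : ℕ) : ℤ) - 2) (by omega), mul_zero, mul_zero, add_zero, add_zero,
          hT2]
        abel
      have hterm : ∀ i ∈ Finset.range (M + 1 + 1),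
          (P (i + 1) * L (M + 1 - i)) * D k =
            D k * (P (i + 1) * L (M + 1 - i)) + (2 : ℂ) • (D (k + i + 1) * L (M + 1 - i))
            - (2 : ℂ) • (D (k + 1) * (P (i + 1) * Z (((M + 1 - i : ℕ) : ℤ) - 1)))
            - (2 : ℂ) • ((2 : ℂ) • (D (k + 1 + i + 1) * Z (((M + 1 - i : ℕ) : ℤ) - 1)))
            + D (k + 2) * (P (i + 1) * Z (((M + 1 - i : ℕ) : ℤ) - 2))
            + (2 : ℂ) • (D (k + 2 + i + 1) * Z (((M + 1 - i : ℕ) : ℤ) - 2)) := by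
        intro i hi
        rw [mul_assoc, IH (M + 1 - i) (by omega) k]
        rw [mul_add, mul_sub, mul_smul_comm]
        rw [← mul_assoc, ← mul_assoc, ← mul_assoc]
        rw [hK i k, hK i (k + 1), hK i (k + 2)]
        simp only [add_mul, smul_mul_assoc, mul_assoc]
        module
      have key : (∑ i ∈ Finset.range (M + 1 + 1), P (i + 1) * L (M + 1 - i)) * D k
          = D k * (∑ i ∈ Finset.range (M + 1 + 1), P (i + 1) * L (M + 1 - i))
            + ((2 : ℂ) * ((M : ℂ) + 2)) • (D (k + 1) * L (M + 1))
            - ((M : ℂ) + 2) • (D (k + 2) * L M) := by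
        rw [Finset.sum_mul, Finset.sum_congr rfl hterm]
        simp only [Finset.sum_add_distrib, Finset.sum_sub_distrib, ← Finset.smul_sum,
          ← Finset.mul_sum]
        rw [hA2, hA3, hA4, hA5, mul_smul_comm, mul_smul_comm]
        push_cast
        module
      rw [show (((M + 1 + 1 : ℕ) : ℤ) - 1) = ((M + 1 : ℕ) : ℤ) by omega, hZcoe,
        show (((M + 1 + 1 : ℕ) : ℤ) - 2) = ((M : ℕ) : ℤ) by omega, hZcoe]
      apply smul_right_injective A hMc
      show ((M : ℂ) + 2) • (L (M + 1 + 1) * D k) = ((M : ℂ) + 2) •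
        (D k * L (M + 1 + 1) - (2 : ℂ) • (D (k + 1) * L (M + 1)) + D (k + 2) * L M)
      rw [← smul_mul_assoc, hS, neg_mul, key]
      conv_rhs => rw [smul_add, smul_sub, ← mul_smul_comm, hS, mul_neg, smul_smul]
      module
  rw [hZcoe i, h2s]
  exact main i k

end
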